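/- arXiv:2109.01566 — 4 statements merged into one kernel-verified Lean document; each statement's English description precedes it below -/
import Mathlib

section
/- Let 0 < σ₁ < σ₂, A > 0, let X* be a random variable with |X*| ≤ A a.s., and let f_{Y₁}(y) = E[φ_{σ₁}(y − X*)], f_{Y₂}(y) = E[φ_{σ₂}(y − X*)]. Define g(y) = E[log f_{Y₂}(y + N)] − log f_{Y₁}(y) with N ~ N(0, σ₂² − σ₁²) independent of X*. Then for all |y| ≥ A: g(y) ≥ log(σ₁/σ₂) − (|y| + A)²/(2σ₂²) − (σ₂² − σ₁²)/(2σ₂²) + (|y| − A)²/(2σ₁²). -/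
open MeasureTheory Real Set

noncomputable def gaussPdf (σ t : ℝ) : ℝ :=
  (Real.sqrt (2 * Real.pi * σ ^ 2))⁻¹ * Real.exp (-(t ^ 2) / (2 * σ ^ 2))


lemma gaussPdf_eq (σ : ℝ) : gaussPdf σ =
    fun t => (Real.sqrt (2 * Real.pi * σ ^ 2))⁻¹ * Real.exp (-((2 * σ ^ 2)⁻¹) * t ^ 2) := by
  funext t; unfold gaussPdf; congr 1; ring

lemma gaussPdf_pos {σ : ℝ} (hσ : 0 < σ) (t : ℝ) : 0 < gaussPdf σ t := by
  unfold gaussPdf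
  have : 0 < 2 * Real.pi * σ ^ 2 := by positivity
  positivity

lemma gaussPdf_le {σ : ℝ} (hσ : 0 < σ) (t : ℝ) :
    gaussPdf σ t ≤ (Real.sqrt (2 * Real.pi * σ ^ 2))⁻¹ := by
  unfold gaussPdf
  have h1 : Real.exp (-(t ^ 2) / (2 * σ ^ 2)) ≤ 1 := by
    rw [Real.exp_le_one_iff]
    apply div_nonpos_of_nonpos_of_nonneg
    · exact neg_nonpos.2 (by positivity)
    · positivity
  nlinarith [inv_nonneg.2 (Real.sqrt_nonneg (2 * Real.pi * σ ^ 2))]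

lemma gaussPdf_anti {σ : ℝ} (hσ : 0 < σ) {s t : ℝ} (h : s ^ 2 ≤ t ^ 2) :
    gaussPdf σ t ≤ gaussPdf σ s := by
  unfold gaussPdf
  apply mul_le_mul_of_nonneg_left _ (inv_nonneg.2 (Real.sqrt_nonneg _))
  apply Real.exp_le_exp.2
  apply div_le_div_of_nonneg_right (by linarith) (by positivity)

lemma continuous_gaussPdf (σ : ℝ) : Continuous (gaussPdf σ) := by
  unfold gaussPdf; fun_prop

lemma integrable_gaussPdf {σ : ℝ} (hσ : 0 < σ) : Integrable (gaussPdf σ) := by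
  rw [gaussPdf_eq]
  exact (integrable_exp_neg_mul_sq (by positivity)).const_mul _

lemma integral_gaussPdf {σ : ℝ} (hσ : 0 < σ) : ∫ t, gaussPdf σ t = 1 := by
  rw [gaussPdf_eq]
  simp only []
  rw [integral_const_mul, integral_gaussian]
  rw [show Real.pi / (2 * σ ^ 2)⁻¹ = 2 * Real.pi * σ ^ 2 by field_simp]
  exact inv_mul_cancel₀ (ne_of_gt (Real.sqrt_pos.2 (by positivity)))

lemma integrable_id_gaussPdf {σ : ℝ} (hσ : 0 < σ) :
    Integrable (fun t : ℝ => t * gaussPdf σ t) := by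
  have : (fun t : ℝ => t * gaussPdf σ t) = fun t =>
      (Real.sqrt (2 * Real.pi * σ ^ 2))⁻¹ * (t * Real.exp (-((2 * σ ^ 2)⁻¹) * t ^ 2)) := by
    rw [gaussPdf_eq]; funext t; ring
  rw [this]
  exact (integrable_mul_exp_neg_mul_sq (by positivity)).const_mul _

lemma integrable_sq_gaussPdf {σ : ℝ} (hσ : 0 < σ) :
    Integrable (fun t : ℝ => t ^ 2 * gaussPdf σ t) := by
  have : (fun t : ℝ => t ^ 2 * gaussPdf σ t) = fun t =>
      (Real.sqrt (2 * Real.pi * σ ^ 2))⁻¹ * (t ^ 2 * Real.exp (-((2 * σ ^ 2)⁻¹) * t ^ 2)) := by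
    rw [gaussPdf_eq]; funext t; ring
  rw [this]
  refine Integrable.const_mul ?_ _
  simpa using integrable_rpow_mul_exp_neg_mul_sq (by positivity : (0:ℝ) < (2 * σ ^ 2)⁻¹) (s := 2) (by norm_num)

lemma integral_id_gaussPdf {σ : ℝ} (hσ : 0 < σ) :
    ∫ t : ℝ, t * gaussPdf σ t = 0 := by
  have hodd : ∀ t : ℝ, (-t) * gaussPdf σ (-t) = -(t * gaussPdf σ t) := by
    intro t; unfold gaussPdf; rw [neg_sq]; ring
  have h := integral_neg_eq_self (fun t : ℝ => t * gaussPdf σ t) (volume : Measure ℝ)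
  simp only [hodd, integral_neg] at h
  linarith

lemma integral_sq_exp_Ioi {b : ℝ} (hb : 0 < b) :
    ∫ t in Ioi (0:ℝ), t ^ 2 * Real.exp (-b * t ^ 2)
      = b ^ (-(3:ℝ)/2) * (Real.sqrt Real.pi / 4) := by
  have h := integral_rpow_mul_exp_neg_mul_rpow (p := 2) (q := 2) (by norm_num) (by norm_num) hb
  have heq : ∫ t in Ioi (0:ℝ), t ^ 2 * Real.exp (-b * t ^ 2)
      = ∫ t in Ioi (0:ℝ), t ^ (2:ℝ) * Real.exp (-b * t ^ (2:ℝ)) := by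
    apply setIntegral_congr_fun measurableSet_Ioi
    intro x hx
    have h2 : (2:ℝ) = ((2:ℕ):ℝ) := by norm_num
    simp only [h2, Real.rpow_natCast]
  rw [heq, h, show ((2:ℝ)+1)/2 = 1/2 + 1 by norm_num, Real.Gamma_add_one (by norm_num),
    Real.Gamma_one_half_eq, show -((2:ℝ)+1)/2 = -(3:ℝ)/2 by norm_num]
  ring

lemma integral_sq_exp {b : ℝ} (hb : 0 < b) :
    ∫ t : ℝ, t ^ 2 * Real.exp (-b * t ^ 2)
      = b ^ (-(3:ℝ)/2) * (Real.sqrt Real.pi / 2) := by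
  have hint : Integrable (fun t : ℝ => t ^ 2 * Real.exp (-b * t ^ 2)) := by
    simpa using integrable_rpow_mul_exp_neg_mul_sq hb (s := 2) (by norm_num)
  have hsplit := intervalIntegral.integral_Iic_add_Ioi (b := (0:ℝ)) (μ := volume)
    (hint.integrableOn) (hint.integrableOn)
  have hneg : ∫ t in Iic (0:ℝ), t ^ 2 * Real.exp (-b * t ^ 2)
      = ∫ t in Ioi (0:ℝ), t ^ 2 * Real.exp (-b * t ^ 2) := by
    rw [← neg_zero, ← integral_comp_neg_Ioi]
    simp
  rw [← hsplit, hneg, integral_sq_exp_Ioi hb]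
  ring

lemma integral_sq_gaussPdf {σ : ℝ} (hσ : 0 < σ) :
    ∫ t : ℝ, t ^ 2 * gaussPdf σ t = σ ^ 2 := by
  have h : (fun t : ℝ => t ^ 2 * gaussPdf σ t) = fun t =>
      (Real.sqrt (2 * Real.pi * σ ^ 2))⁻¹ * (t ^ 2 * Real.exp (-((2 * σ ^ 2)⁻¹) * t ^ 2)) := by
    rw [gaussPdf_eq]; funext t; ring
  rw [h, integral_const_mul, integral_sq_exp (by positivity)]
  set a : ℝ := 2 * σ ^ 2 with ha_def
  have ha : 0 < a := by positivity
  have h₁ : (a⁻¹ : ℝ) ^ (-(3:ℝ)/2) = a ^ ((3:ℝ)/2) := by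
    rw [Real.inv_rpow ha.le, ← Real.rpow_neg ha.le, neg_div, neg_neg]
  have h₂ : a ^ ((3:ℝ)/2) = a * Real.sqrt a := by
    rw [show (3:ℝ)/2 = 1 + 1/2 by norm_num, Real.rpow_add ha, Real.rpow_one,
      ← Real.sqrt_eq_rpow]
  have h₃ : Real.sqrt (2 * Real.pi * σ ^ 2) = Real.sqrt Real.pi * Real.sqrt a := by
    rw [show 2 * Real.pi * σ ^ 2 = Real.pi * a by rw [ha_def]; ring,
      Real.sqrt_mul Real.pi_nonneg]
  have hsa : 0 < Real.sqrt a := Real.sqrt_pos.2 ha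
  have hsπ : 0 < Real.sqrt Real.pi := Real.sqrt_pos.2 Real.pi_pos
  have hself : Real.sqrt a * Real.sqrt a = a := Real.mul_self_sqrt ha.le
  rw [h₁, h₂, h₃]
  rw [mul_inv]
  field_simp
  rw [ha_def]

section mu
variable {σ A : ℝ} {μ : Measure ℝ} [IsProbabilityMeasure μ]

lemma integrable_gauss_shift (hσ : 0 < σ) (z : ℝ) :
    Integrable (fun x => gaussPdf σ (z - x)) μ := by
  apply Integrable.mono' (integrable_const ((Real.sqrt (2 * Real.pi * σ ^ 2))⁻¹))
  · exact ((continuous_gaussPdf σ).comp (continuous_const.sub continuous_id)).aestronglyMeasurable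
  · refine ae_of_all _ fun x => ?_
    rw [Real.norm_eq_abs, abs_of_nonneg (gaussPdf_pos hσ _).le]
    exact gaussPdf_le hσ _

lemma f_le_c (hσ : 0 < σ) (z : ℝ) :
    ∫ x, gaussPdf σ (z - x) ∂μ ≤ (Real.sqrt (2 * Real.pi * σ ^ 2))⁻¹ := by
  calc ∫ x, gaussPdf σ (z - x) ∂μ
      ≤ ∫ _x, (Real.sqrt (2 * Real.pi * σ ^ 2))⁻¹ ∂μ :=
        integral_mono (integrable_gauss_shift hσ z) (integrable_const _)
          (fun x => gaussPdf_le hσ _)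
    _ = (Real.sqrt (2 * Real.pi * σ ^ 2))⁻¹ := by simp

lemma f_pos (hσ : 0 < σ) (hA : 0 < A) (hμ : ∀ᵐ x ∂μ, |x| ≤ A) (z : ℝ) :
    0 < ∫ x, gaussPdf σ (z - x) ∂μ := by
  have h : ∫ _x, gaussPdf σ (|z| + A) ∂μ ≤ ∫ x, gaussPdf σ (z - x) ∂μ := by
    apply integral_mono_ae (integrable_const _) (integrable_gauss_shift hσ z)
    filter_upwards [hμ] with x hx
    apply gaussPdf_anti hσ
    have h1 : |z - x| ≤ |z| + A := (abs_sub z x).trans (by linarith)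
    have := sq_le_sq' (abs_le.1 h1).1 (abs_le.1 h1).2
    linarith
  have h2 : (0:ℝ) < gaussPdf σ (|z| + A) := gaussPdf_pos hσ _
  calc (0:ℝ) < gaussPdf σ (|z| + A) := h2
    _ = ∫ _x, gaussPdf σ (|z| + A) ∂μ := by simp
    _ ≤ _ := h

lemma integrable_sq_shift (hA : 0 < A) (hμ : ∀ᵐ x ∂μ, |x| ≤ A) (z : ℝ) :
    Integrable (fun x => (z - x) ^ 2) μ := by
  apply Integrable.mono' (integrable_const ((|z| + A) ^ 2))
  · exact (Continuous.pow (continuous_const.sub continuous_id) 2).aestronglyMeasurable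
  · filter_upwards [hμ] with x hx
    rw [Real.norm_eq_abs, abs_of_nonneg (sq_nonneg _)]
    have h1 : |z - x| ≤ |z| + A := (abs_sub z x).trans (by linarith)
    have := sq_le_sq' (abs_le.1 h1).1 (abs_le.1 h1).2
    linarith

lemma Q_le (hA : 0 < A) (hμ : ∀ᵐ x ∂μ, |x| ≤ A) (z : ℝ) :
    ∫ x, (z - x) ^ 2 ∂μ ≤ (|z| + A) ^ 2 := by
  calc ∫ x, (z - x) ^ 2 ∂μ ≤ ∫ _x, (|z| + A) ^ 2 ∂μ := by
        apply integral_mono_ae (integrable_sq_shift hA hμ z) (integrable_const _)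
        filter_upwards [hμ] with x hx
        have h1 : |z - x| ≤ |z| + A := (abs_sub z x).trans (by linarith)
        have := sq_le_sq' (abs_le.1 h1).1 (abs_le.1 h1).2
        linarith
    _ = (|z| + A) ^ 2 := by simp

lemma log_f_ge (hσ : 0 < σ) (hA : 0 < A) (hμ : ∀ᵐ x ∂μ, |x| ≤ A) (z : ℝ) :
    Real.log ((Real.sqrt (2 * Real.pi * σ ^ 2))⁻¹) - (∫ x, (z - x) ^ 2 ∂μ) / (2 * σ ^ 2)
      ≤ Real.log (∫ x, gaussPdf σ (z - x) ∂μ) := by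
  set c := (Real.sqrt (2 * Real.pi * σ ^ 2))⁻¹ with hc
  have hcpos : 0 < c := by
    rw [hc]; have : 0 < 2 * Real.pi * σ ^ 2 := by positivity
    positivity
  set Q := ∫ x, (z - x) ^ 2 ∂μ with hQ
  set a := -Q / (2 * σ ^ 2) with ha
  have hs : (0:ℝ) < 2 * σ ^ 2 := by positivity
  have hQint := integrable_sq_shift hA hμ z
  have key : c * Real.exp a ≤ ∫ x, gaussPdf σ (z - x) ∂μ := by
    have hle : ∀ x : ℝ, c * Real.exp a * (1 + (-(z - x) ^ 2 / (2 * σ ^ 2) - a))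
        ≤ gaussPdf σ (z - x) := by
      intro x
      have h1 := Real.add_one_le_exp (-(z - x) ^ 2 / (2 * σ ^ 2) - a)
      have h2 : gaussPdf σ (z - x) = c * Real.exp a
          * Real.exp (-(z - x) ^ 2 / (2 * σ ^ 2) - a) := by
        unfold gaussPdf
        rw [← hc, mul_assoc, ← Real.exp_add]
        congr 1
        ring
      rw [h2]
      have h3 : 0 ≤ c * Real.exp a := by positivity
      nlinarith [h1, h3]
    have hL_eq : (fun x => c * Real.exp a * (1 + (-(z - x) ^ 2 / (2 * σ ^ 2) - a)))
        = fun x => (c * Real.exp a * (1 - a)) + (-(c * Real.exp a) / (2 * σ ^ 2)) * (z - x) ^ 2 := by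
      funext x; field_simp; ring
    have hL_int : Integrable
        (fun x => c * Real.exp a * (1 + (-(z - x) ^ 2 / (2 * σ ^ 2) - a))) μ := by
      rw [hL_eq]
      exact (integrable_const _).add (hQint.const_mul _)
    have hmono := integral_mono (μ := μ) hL_int (integrable_gauss_shift hσ z) hle
    have hcomp : ∫ x, c * Real.exp a * (1 + (-(z - x) ^ 2 / (2 * σ ^ 2) - a)) ∂μ
        = c * Real.exp a := by
      rw [hL_eq]
      rw [integral_add (integrable_const _) (hQint.const_mul _), integral_const,
        integral_const_mul]
      simp only [measure_univ, probReal_univ, ENNReal.toReal_one, one_smul, ← hQ]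
      rw [ha]
      field_simp
      ring
    rwa [hcomp] at hmono
  have hlog := Real.log_le_log (by positivity) key
  rw [Real.log_mul (ne_of_gt hcpos) (Real.exp_ne_zero _), Real.log_exp] at hlog
  rw [ha, neg_div] at hlog
  linarith

end mu

/-- Lower bound on `g(y) = E[log f_{Y₂}(y+N)] − log f_{Y₁}(y)` for `|y| ≥ A`. -/
theorem g_lower_bound
    (σ1 σ2 A : ℝ) (h1 : 0 < σ1) (h12 : σ1 < σ2) (hA : 0 < A)
    (μ : Measure ℝ) [IsProbabilityMeasure μ] (hμ : ∀ᵐ x ∂μ, |x| ≤ A)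
    (fY1 fY2 g : ℝ → ℝ)
    (hfY1 : ∀ y, fY1 y = ∫ x, gaussPdf σ1 (y - x) ∂μ)
    (hfY2 : ∀ y, fY2 y = ∫ x, gaussPdf σ2 (y - x) ∂μ)
    (hg : ∀ y, g y =
      (∫ n, Real.log (fY2 (y + n)) * gaussPdf (Real.sqrt (σ2 ^ 2 - σ1 ^ 2)) n)
        - Real.log (fY1 y)) :
    ∀ y : ℝ, A ≤ |y| →
      g y ≥ Real.log (σ1 / σ2) - (|y| + A) ^ 2 / (2 * σ2 ^ 2)
            - (σ2 ^ 2 - σ1 ^ 2) / (2 * σ2 ^ 2) + (|y| - A) ^ 2 / (2 * σ1 ^ 2) := by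
  intro y hy
  have hσ2 : 0 < σ2 := h1.trans h12
  have hττ : 0 < σ2 ^ 2 - σ1 ^ 2 := by nlinarith
  have hτ : 0 < Real.sqrt (σ2 ^ 2 - σ1 ^ 2) := Real.sqrt_pos.2 hττ
  have hτ2 : Real.sqrt (σ2 ^ 2 - σ1 ^ 2) ^ 2 = σ2 ^ 2 - σ1 ^ 2 := Real.sq_sqrt hττ.le
  have hc1pos : 0 < (Real.sqrt (2 * Real.pi * σ1 ^ 2))⁻¹ := by
    have : 0 < 2 * Real.pi * σ1 ^ 2 := by positivity
    positivity
  have hc2pos : 0 < (Real.sqrt (2 * Real.pi * σ2 ^ 2))⁻¹ := by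
    have : 0 < 2 * Real.pi * σ2 ^ 2 := by positivity
    positivity
  have hs2 : (0:ℝ) < 2 * σ2 ^ 2 := by positivity
  -- Step 1: upper bound for log (fY1 y)
  have hfY1pos : 0 < fY1 y := by rw [hfY1]; exact f_pos h1 hA hμ y
  have step1 : Real.log (fY1 y) ≤
      Real.log ((Real.sqrt (2 * Real.pi * σ1 ^ 2))⁻¹) - (|y| - A) ^ 2 / (2 * σ1 ^ 2) := by
    have hb : fY1 y ≤ gaussPdf σ1 (|y| - A) := by
      rw [hfY1]
      calc ∫ x, gaussPdf σ1 (y - x) ∂μ ≤ ∫ _x, gaussPdf σ1 (|y| - A) ∂μ := by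
            apply integral_mono_ae (integrable_gauss_shift h1 y) (integrable_const _)
            filter_upwards [hμ] with x hx
            apply gaussPdf_anti h1
            have h1' : |y| - A ≤ |y - x| := by
              have := abs_sub_abs_le_abs_sub y x
              linarith
            calc (|y| - A) ^ 2 ≤ |y - x| ^ 2 := by nlinarith [abs_nonneg (y - x)]
              _ = (y - x) ^ 2 := sq_abs _
        _ = gaussPdf σ1 (|y| - A) := by simp
    have hlog := Real.log_le_log hfY1pos hb
    have hexp : Real.log (gaussPdf σ1 (|y| - A)) =
        Real.log ((Real.sqrt (2 * Real.pi * σ1 ^ 2))⁻¹) - (|y| - A) ^ 2 / (2 * σ1 ^ 2) := by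
      unfold gaussPdf
      rw [Real.log_mul (ne_of_gt hc1pos) (Real.exp_ne_zero _), Real.log_exp, neg_div]
      ring
    linarith
  -- continuity of fY2
  have hfY2cont : Continuous fY2 := by
    have heq : fY2 = fun z => ∫ x, gaussPdf σ2 (z - x) ∂μ := funext hfY2
    rw [heq]
    apply continuous_of_dominated
    · intro z
      exact ((continuous_gaussPdf σ2).comp
        (continuous_const.sub continuous_id)).aestronglyMeasurable
    · intro z
      refine ae_of_all _ fun x => ?_
      rw [Real.norm_eq_abs, abs_of_nonneg (gaussPdf_pos hσ2 _).le]
      exact gaussPdf_le hσ2 _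
    · exact integrable_const _
    · exact ae_of_all _ fun x =>
        (continuous_gaussPdf σ2).comp (continuous_id.sub continuous_const)
  -- moments wrt μ
  have hmint : Integrable (fun x : ℝ => x) μ := by
    apply Integrable.mono' (integrable_const A) measurable_id.aestronglyMeasurable
    filter_upwards [hμ] with x hx; rwa [Real.norm_eq_abs]
  have hsub_int : Integrable (fun x : ℝ => y - x) μ := (integrable_const y).sub hmint
  have hQexp : ∀ n : ℝ, ∫ x, (y + n - x) ^ 2 ∂μ =
      (∫ x, (y - x) ^ 2 ∂μ) + 2 * (y - ∫ x, x ∂μ) * n + n ^ 2 := by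
    intro n
    have heq : (fun x : ℝ => (y + n - x) ^ 2)
        = fun x => ((y - x) ^ 2 + (2 * n) * (y - x)) + n ^ 2 := by funext x; ring
    have i0 : Integrable (fun x : ℝ => (2 * n) * (y - x)) μ := hsub_int.const_mul _
    have i1 : Integrable (fun x : ℝ => (y - x) ^ 2 + (2 * n) * (y - x)) μ :=
      (integrable_sq_shift hA hμ y).add i0
    rw [heq, integral_add i1 (integrable_const _),
      integral_add (integrable_sq_shift hA hμ y) i0,
      integral_const_mul, integral_sub (integrable_const y) hmint]
    simp only [integral_const, measure_univ, probReal_univ, ENNReal.toReal_one, one_smul, smul_eq_mul]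
    ring
  -- lower function L
  set τ := Real.sqrt (σ2 ^ 2 - σ1 ^ 2) with hτdef
  have hLeq : (fun n : ℝ => (Real.log ((Real.sqrt (2 * Real.pi * σ2 ^ 2))⁻¹)
        - ((∫ x, (y - x) ^ 2 ∂μ) + 2 * (y - ∫ x, x ∂μ) * n + n ^ 2) / (2 * σ2 ^ 2))
        * gaussPdf τ n)
      = fun n => ((Real.log ((Real.sqrt (2 * Real.pi * σ2 ^ 2))⁻¹)
          - (∫ x, (y - x) ^ 2 ∂μ) / (2 * σ2 ^ 2)) * gaussPdf τ n
        + (-(y - ∫ x, x ∂μ) / σ2 ^ 2) * (n * gaussPdf τ n))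
        + (-(1:ℝ) / (2 * σ2 ^ 2)) * (n ^ 2 * gaussPdf τ n) := by
    funext n
    field_simp
    ring
  have hLint : Integrable (fun n : ℝ => (Real.log ((Real.sqrt (2 * Real.pi * σ2 ^ 2))⁻¹)
        - ((∫ x, (y - x) ^ 2 ∂μ) + 2 * (y - ∫ x, x ∂μ) * n + n ^ 2) / (2 * σ2 ^ 2))
        * gaussPdf τ n) := by
    rw [hLeq]
    exact (((integrable_gaussPdf hτ).const_mul _).add
      ((integrable_id_gaussPdf hτ).const_mul _)).add ((integrable_sq_gaussPdf hτ).const_mul _)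
  have hLval : ∫ n : ℝ, (Real.log ((Real.sqrt (2 * Real.pi * σ2 ^ 2))⁻¹)
        - ((∫ x, (y - x) ^ 2 ∂μ) + 2 * (y - ∫ x, x ∂μ) * n + n ^ 2) / (2 * σ2 ^ 2))
        * gaussPdf τ n
      = Real.log ((Real.sqrt (2 * Real.pi * σ2 ^ 2))⁻¹)
        - ((∫ x, (y - x) ^ 2 ∂μ) + τ ^ 2) / (2 * σ2 ^ 2) := by
    have j1 : Integrable (fun n : ℝ => (Real.log ((Real.sqrt (2 * Real.pi * σ2 ^ 2))⁻¹)
        - (∫ x, (y - x) ^ 2 ∂μ) / (2 * σ2 ^ 2)) * gaussPdf τ n) :=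
      (integrable_gaussPdf hτ).const_mul _
    have j2 : Integrable (fun n : ℝ => (-(y - ∫ x, x ∂μ) / σ2 ^ 2) * (n * gaussPdf τ n)) :=
      (integrable_id_gaussPdf hτ).const_mul _
    have j3 : Integrable (fun n : ℝ => (-(1:ℝ) / (2 * σ2 ^ 2)) * (n ^ 2 * gaussPdf τ n)) :=
      (integrable_sq_gaussPdf hτ).const_mul _
    have j12 : Integrable (fun n : ℝ => (Real.log ((Real.sqrt (2 * Real.pi * σ2 ^ 2))⁻¹)
        - (∫ x, (y - x) ^ 2 ∂μ) / (2 * σ2 ^ 2)) * gaussPdf τ n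
        + (-(y - ∫ x, x ∂μ) / σ2 ^ 2) * (n * gaussPdf τ n)) := j1.add j2
    rw [hLeq, integral_add j12 j3, integral_add j1 j2,
      integral_const_mul, integral_const_mul, integral_const_mul,
      integral_gaussPdf hτ, integral_id_gaussPdf hτ, integral_sq_gaussPdf hτ]
    field_simp
    ring
  -- pointwise lower bound
  have hpt : ∀ n : ℝ, (Real.log ((Real.sqrt (2 * Real.pi * σ2 ^ 2))⁻¹)
        - ((∫ x, (y - x) ^ 2 ∂μ) + 2 * (y - ∫ x, x ∂μ) * n + n ^ 2) / (2 * σ2 ^ 2))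
        * gaussPdf τ n
      ≤ Real.log (fY2 (y + n)) * gaussPdf τ n := by
    intro n
    have h := log_f_ge hσ2 hA hμ (y + n)
    rw [hQexp n, ← hfY2 (y + n)] at h
    exact mul_le_mul_of_nonneg_right h (gaussPdf_pos hτ n).le
  -- bound on |log (fY2 z)|
  have habs : ∀ z : ℝ, |Real.log (fY2 z)| ≤
      |Real.log ((Real.sqrt (2 * Real.pi * σ2 ^ 2))⁻¹)| + (|z| + A) ^ 2 / (2 * σ2 ^ 2) := by
    intro z
    have hposz : 0 < fY2 z := by rw [hfY2]; exact f_pos hσ2 hA hμ z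
    have hup : Real.log (fY2 z) ≤ Real.log ((Real.sqrt (2 * Real.pi * σ2 ^ 2))⁻¹) := by
      apply Real.log_le_log hposz
      rw [hfY2]
      exact f_le_c hσ2 z
    have hlo : Real.log ((Real.sqrt (2 * Real.pi * σ2 ^ 2))⁻¹) - (|z| + A) ^ 2 / (2 * σ2 ^ 2)
        ≤ Real.log (fY2 z) := by
      have h := log_f_ge hσ2 hA hμ z
      rw [← hfY2 z] at h
      have hq := Q_le hA hμ z
      have hq2 : (∫ x, (z - x) ^ 2 ∂μ) / (2 * σ2 ^ 2) ≤ (|z| + A) ^ 2 / (2 * σ2 ^ 2) :=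
        div_le_div_of_nonneg_right hq hs2.le
      linarith
    have hd : (0:ℝ) ≤ (|z| + A) ^ 2 / (2 * σ2 ^ 2) := by positivity
    rw [abs_le]
    constructor
    · have := neg_abs_le (Real.log ((Real.sqrt (2 * Real.pi * σ2 ^ 2))⁻¹))
      linarith
    · have := le_abs_self (Real.log ((Real.sqrt (2 * Real.pi * σ2 ^ 2))⁻¹))
      linarith
  -- integrability of the integrand
  have habsφ : (fun n : ℝ => |n| * gaussPdf τ n) = fun n => |n * gaussPdf τ n| := by
    funext n
    rw [abs_mul, abs_of_nonneg (gaussPdf_pos hτ n).le]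
  have habsφint : Integrable (fun n : ℝ => |n| * gaussPdf τ n) := by
    rw [habsφ]; exact (integrable_id_gaussPdf hτ).abs
  have hBint : Integrable (fun n : ℝ =>
      ((|Real.log ((Real.sqrt (2 * Real.pi * σ2 ^ 2))⁻¹)| + (|y| + A) ^ 2 / (2 * σ2 ^ 2))
          * gaussPdf τ n
        + (2 * (|y| + A) / (2 * σ2 ^ 2)) * (|n| * gaussPdf τ n))
        + (1 / (2 * σ2 ^ 2)) * (n ^ 2 * gaussPdf τ n)) :=
    (((integrable_gaussPdf hτ).const_mul _).add (habsφint.const_mul _)).add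
      ((integrable_sq_gaussPdf hτ).const_mul _)
  have hfint : Integrable (fun n : ℝ => Real.log (fY2 (y + n)) * gaussPdf τ n) := by
    apply Integrable.mono' hBint
    · exact ((Real.measurable_log.comp
        ((hfY2cont.comp (continuous_const.add continuous_id)).measurable)).mul
        (continuous_gaussPdf τ).measurable).aestronglyMeasurable
    · refine ae_of_all _ fun n => ?_
      have h1 := habs (y + n)
      have h2 : (|y + n| + A) ^ 2 ≤ (|y| + A) ^ 2 + 2 * (|y| + A) * |n| + n ^ 2 := by
        nlinarith [abs_add_le y n, abs_nonneg n, abs_nonneg y, abs_nonneg (y + n), sq_abs n]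
      have h3 : (|y + n| + A) ^ 2 / (2 * σ2 ^ 2)
          ≤ ((|y| + A) ^ 2 + 2 * (|y| + A) * |n| + n ^ 2) / (2 * σ2 ^ 2) :=
        div_le_div_of_nonneg_right h2 hs2.le
      have h4 : |Real.log (fY2 (y + n))| ≤
          |Real.log ((Real.sqrt (2 * Real.pi * σ2 ^ 2))⁻¹)|
            + ((|y| + A) ^ 2 + 2 * (|y| + A) * |n| + n ^ 2) / (2 * σ2 ^ 2) := by linarith
      have h5 : ‖Real.log (fY2 (y + n)) * gaussPdf τ n‖
          = |Real.log (fY2 (y + n))| * gaussPdf τ n := by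
        rw [norm_mul, Real.norm_eq_abs, Real.norm_eq_abs,
          abs_of_nonneg (gaussPdf_pos hτ n).le]
      rw [h5]
      calc |Real.log (fY2 (y + n))| * gaussPdf τ n
          ≤ (|Real.log ((Real.sqrt (2 * Real.pi * σ2 ^ 2))⁻¹)|
            + ((|y| + A) ^ 2 + 2 * (|y| + A) * |n| + n ^ 2) / (2 * σ2 ^ 2)) * gaussPdf τ n :=
            mul_le_mul_of_nonneg_right h4 (gaussPdf_pos hτ n).le
        _ = _ := by field_simp; ring
  -- lower bound on the n-integral
  have hIn : Real.log ((Real.sqrt (2 * Real.pi * σ2 ^ 2))⁻¹)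
        - ((∫ x, (y - x) ^ 2 ∂μ) + τ ^ 2) / (2 * σ2 ^ 2)
      ≤ ∫ n : ℝ, Real.log (fY2 (y + n)) * gaussPdf τ n := by
    rw [← hLval]
    exact integral_mono hLint hfint hpt
  -- log constant difference
  have hlogc : Real.log ((Real.sqrt (2 * Real.pi * σ2 ^ 2))⁻¹)
      - Real.log ((Real.sqrt (2 * Real.pi * σ1 ^ 2))⁻¹) = Real.log (σ1 / σ2) := by
    have h2π : (0:ℝ) < Real.sqrt (2 * Real.pi) := Real.sqrt_pos.2 (by positivity)
    have e1 : Real.sqrt (2 * Real.pi * σ1 ^ 2) = Real.sqrt (2 * Real.pi) * σ1 := by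
      rw [Real.sqrt_mul (by positivity), Real.sqrt_sq h1.le]
    have e2 : Real.sqrt (2 * Real.pi * σ2 ^ 2) = Real.sqrt (2 * Real.pi) * σ2 := by
      rw [Real.sqrt_mul (by positivity), Real.sqrt_sq hσ2.le]
    rw [e1, e2, Real.log_inv, Real.log_inv,
      Real.log_mul (ne_of_gt h2π) (ne_of_gt h1),
      Real.log_mul (ne_of_gt h2π) (ne_of_gt hσ2),
      Real.log_div (ne_of_gt h1) (ne_of_gt hσ2)]
    ring
  -- final assembly
  rw [hg y, ge_iff_le]
  have hqy := Q_le hA hμ y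
  have hdiv : ((∫ x, (y - x) ^ 2 ∂μ) + τ ^ 2) / (2 * σ2 ^ 2)
      ≤ ((|y| + A) ^ 2 + (σ2 ^ 2 - σ1 ^ 2)) / (2 * σ2 ^ 2) :=
    div_le_div_of_nonneg_right (by rw [hτ2]; linarith) hs2.le
  have hsplit : ((|y| + A) ^ 2 + (σ2 ^ 2 - σ1 ^ 2)) / (2 * σ2 ^ 2)
      = (|y| + A) ^ 2 / (2 * σ2 ^ 2) + (σ2 ^ 2 - σ1 ^ 2) / (2 * σ2 ^ 2) := by ring
  rw [hsplit] at hdiv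
  have := hIn
  linarith
end

section
/- If ξ : ℝ → ℝ is measurable and bounded, x ↦ ∫ ξ(y)·φ_σ(y − x) dy has at most n zeros on an interval I whenever ξ changes sign at most n times, unless the integral transform is identically zero. (Special case of the oscillation theorem for the Gaussian kernel, n = 1: if there exists y₀ such that ξ(y) ≤ 0 for y ≤ y₀ and ξ(y) ≥ 0 for y ≥ y₀, and Ξ(x) = ∫ ξ(y)φ_σ(y − x) dy is not identically zero, then Ξ has at most one zero in ℝ.) -/
open MeasureTheory Real

/-- Oscillation theorem for the Gaussian kernel, case `n = 1`: if `ξ` is measurable and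
bounded, changes sign at most once (nonpositive left of `y₀`, nonnegative right of `y₀`),
and `Ξ(x) = ∫ ξ(y) φ_σ(y − x) dy` is not identically zero, then `Ξ` has at most one zero. -/
theorem oscillation_theorem_one_sign_change
    (σ : ℝ) (hσ : 0 < σ) (ξ : ℝ → ℝ) (hmeas : Measurable ξ)
    (C : ℝ) (hbdd : ∀ y, |ξ y| ≤ C)
    (y0 : ℝ) (hneg : ∀ y ≤ y0, ξ y ≤ 0) (hpos : ∀ y, y0 ≤ y → 0 ≤ ξ y)
    (Ξ : ℝ → ℝ) (hΞ : ∀ x, Ξ x = ∫ y, ξ y * gaussPdf σ (y - x))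
    (hne : ¬ ∀ x, Ξ x = 0) :
    Set.Subsingleton {x : ℝ | Ξ x = 0} := by
  set s : ℝ := 2 * σ ^ 2 with hs_def
  have hs : 0 < s := by positivity
  set κ : ℝ := (Real.sqrt (2 * Real.pi * σ ^ 2))⁻¹ with hκ_def
  have hκ : 0 < κ := by
    rw [hκ_def]
    have : 0 < Real.sqrt (2 * Real.pi * σ ^ 2) :=
      Real.sqrt_pos.mpr (by positivity)
    positivity
  -- integrability of the basic integrand
  have hint : ∀ x : ℝ, Integrable (fun y => ξ y * Real.exp (-(y - x) ^ 2 / s)) := by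
    intro x
    have h1 : Integrable (fun y : ℝ => Real.exp (-(1 / s) * y ^ 2)) :=
      integrable_exp_neg_mul_sq (by positivity)
    have h2 := h1.comp_sub_right x
    have h3 : Integrable (fun y : ℝ => Real.exp (-(y - x) ^ 2 / s)) := by
      have he : (fun y : ℝ => Real.exp (-(y - x) ^ 2 / s)) =
          fun y => Real.exp (-(1 / s) * (y - x) ^ 2) := by
        funext y; congr 1; field_simp
      rw [he]; exact h2
    exact h3.bdd_mul hmeas.aestronglyMeasurable (ae_of_all _ fun y => by simpa using hbdd y)
  -- Ξ in terms of the normalized integral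
  have hΞJ : ∀ x, Ξ x = κ * ∫ y, ξ y * Real.exp (-(y - x) ^ 2 / s) := by
    intro x
    rw [hΞ x, ← MeasureTheory.integral_const_mul]
    congr 1; funext y
    simp only [gaussPdf]
    rw [hκ_def, hs_def]
    ring
  set g : ℝ → ℝ → ℝ := fun x y =>
    ξ y * Real.exp (-(y - y0) ^ 2 / s) * Real.exp (2 * (y - y0) * (x - y0) / s)
    with hg_def
  have hg : ∀ x y, g x y =
      Real.exp ((x - y0) ^ 2 / s) * (ξ y * Real.exp (-(y - x) ^ 2 / s)) := by
    intro x y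
    have h : (-(y - y0) ^ 2 / s) + (2 * (y - y0) * (x - y0) / s) =
        ((x - y0) ^ 2 / s) + (-(y - x) ^ 2 / s) := by
      field_simp; ring
    calc g x y = ξ y * Real.exp ((-(y - y0) ^ 2 / s) + (2 * (y - y0) * (x - y0) / s)) := by
          rw [Real.exp_add, hg_def]; ring
      _ = _ := by rw [h, Real.exp_add]; ring
  have hgint : ∀ x, Integrable (g x) := by
    intro x
    have : g x = fun y =>
        Real.exp ((x - y0) ^ 2 / s) * (ξ y * Real.exp (-(y - x) ^ 2 / s)) :=
      funext (hg x)
    rw [this]; exact (hint x).const_mul _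
  have hGJ : ∀ x, (∫ y, g x y) =
      Real.exp ((x - y0) ^ 2 / s) * ∫ y, ξ y * Real.exp (-(y - x) ^ 2 / s) := by
    intro x
    rw [← MeasureTheory.integral_const_mul]
    exact congrArg _ (funext (hg x))
  -- key claim
  have key : ∀ x₁ x₂, x₁ < x₂ → Ξ x₁ = 0 → Ξ x₂ = 0 → False := by
    intro x₁ x₂ hlt h1 h2
    have hJ : ∀ x, Ξ x = 0 → (∫ y, ξ y * Real.exp (-(y - x) ^ 2 / s)) = 0 := by
      intro x hx
      have h := (hΞJ x).symm.trans hx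
      exact (mul_eq_zero.mp h).resolve_left hκ.ne'
    have hG1 : (∫ y, g x₁ y) = 0 := by rw [hGJ x₁, hJ x₁ h1, mul_zero]
    have hG2 : (∫ y, g x₂ y) = 0 := by rw [hGJ x₂, hJ x₂ h2, mul_zero]
    have hsub : Integrable (fun y => g x₂ y - g x₁ y) := (hgint x₂).sub (hgint x₁)
    have hnn : ∀ y, 0 ≤ g x₂ y - g x₁ y := by
      intro y
      have hP : (0:ℝ) < Real.exp (-(y - y0) ^ 2 / s) := Real.exp_pos _
      rcases le_total y y0 with hy | hy
      · have hξy : ξ y ≤ 0 := hneg y hy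
        have hnum : 2 * (y - y0) * (x₂ - y0) ≤ 2 * (y - y0) * (x₁ - y0) := by nlinarith
        have hmono : Real.exp (2 * (y - y0) * (x₂ - y0) / s) ≤
            Real.exp (2 * (y - y0) * (x₁ - y0) / s) :=
          Real.exp_le_exp.mpr (div_le_div_of_nonneg_right hnum hs.le)
        have hkey := mul_nonneg (mul_nonneg (neg_nonneg.mpr hξy) hP.le)
          (sub_nonneg.mpr hmono)
        simp only [hg_def]
        nlinarith [hkey]
      · have hξy : 0 ≤ ξ y := hpos y hy
        have hnum : 2 * (y - y0) * (x₁ - y0) ≤ 2 * (y - y0) * (x₂ - y0) := by nlinarith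
        have hmono : Real.exp (2 * (y - y0) * (x₁ - y0) / s) ≤
            Real.exp (2 * (y - y0) * (x₂ - y0) / s) :=
          Real.exp_le_exp.mpr (div_le_div_of_nonneg_right hnum hs.le)
        have hkey := mul_nonneg (mul_nonneg hξy hP.le) (sub_nonneg.mpr hmono)
        simp only [hg_def]
        nlinarith [hkey]
    have hzero : (∫ y, g x₂ y - g x₁ y) = 0 := by
      rw [integral_sub (hgint x₂) (hgint x₁), hG1, hG2]; ring
    have hae : (fun y => g x₂ y - g x₁ y) =ᵐ[volume] 0 :=
      (integral_eq_zero_iff_of_nonneg hnn hsub).mp hzero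
    have hy0ae : ∀ᵐ y : ℝ, y ≠ y0 := by
      have hset : {y : ℝ | ¬ y ≠ y0} = {y0} := by ext y; simp
      rw [ae_iff, hset]; exact measure_singleton y0
    have hξ0 : ∀ᵐ y : ℝ, ξ y = 0 := by
      filter_upwards [hae, hy0ae] with y h hy
      simp only [Pi.zero_apply] at h
      have hP : Real.exp (-(y - y0) ^ 2 / s) ≠ 0 := (Real.exp_pos _).ne'
      have hE : Real.exp (2 * (y - y0) * (x₂ - y0) / s) ≠
          Real.exp (2 * (y - y0) * (x₁ - y0) / s) := by
        intro hcontra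
        have heq := Real.exp_eq_exp.mp hcontra
        field_simp at heq
        linarith
      have hfac : (ξ y * Real.exp (-(y - y0) ^ 2 / s)) *
          (Real.exp (2 * (y - y0) * (x₂ - y0) / s) -
            Real.exp (2 * (y - y0) * (x₁ - y0) / s)) = 0 := by
        simp only [hg_def] at h
        linear_combination h
      rcases mul_eq_zero.mp hfac with h' | h'
      · rcases mul_eq_zero.mp h' with h'' | h''
        · exact h''
        · exact absurd h'' hP
      · exact absurd (sub_eq_zero.mp h') hE
    apply hne
    intro x
    rw [hΞ x]
    apply integral_eq_zero_of_ae
    filter_upwards [hξ0] with y hy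
    simp [hy]
  intro a ha b hb
  simp only [Set.mem_setOf_eq] at ha hb
  by_contra hab
  rcases lt_or_gt_of_ne hab with h | h
  · exact key a b h ha hb
  · exact key b a h hb ha
end

section
/- Tijdeman's number-of-zeros lemma: let R, s, t > 0 with s > 1, and let f be a nonzero complex-analytic function on the closed disk |z| ≤ (st + s + t)R. Then the number of zeros of f (with multiplicity) in the closed disk |z| ≤ R is at most (1/log s)·(log max_{|z| ≤ (st+s+t)R} |f(z)| − log max_{|z| ≤ tR} |f(z)|). -/
open Metric

/-- The order (multiplicity) of a zero of `f` at `z`: the least `n` such that the `n`-th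
iterated derivative of `f` at `z` is nonzero. -/
noncomputable def zeroOrder (f : ℂ → ℂ) (z : ℂ) : ℕ :=
  sInf {n : ℕ | iteratedDeriv n f z ≠ 0}

open Filter Topology in
lemma zeroOrder_spec {f : ℂ → ℂ} {z : ℂ} (hf : AnalyticAt ℂ f z)
    (hne : ¬ ∀ᶠ w in 𝓝 z, f w = 0) :
    ∃ g : ℂ → ℂ, AnalyticAt ℂ g z ∧ g z ≠ 0 ∧
      ∀ᶠ w in 𝓝 z, f w = (w - z) ^ (zeroOrder f z) * g w := by
  obtain ⟨p, hp⟩ := hf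
  have hp0 : p ≠ 0 := fun h => hne (hp.locally_zero_iff.mpr h)
  have hkey : ∀ n, iteratedDeriv n f z = (Nat.factorial n : ℂ) * p.coeff n := by
    intro n
    obtain ⟨rad, hrad⟩ := hp
    have h1 := hrad.factorial_smul (1 : ℂ) n
    rw [iteratedDeriv_eq_iteratedFDeriv, ← h1, nsmul_eq_mul]
    rfl
  have hzo : zeroOrder f z = p.order := by
    unfold zeroOrder FormalMultilinearSeries.order
    congr 1
    ext n
    simp only [Set.mem_setOf_eq, hkey n, mul_ne_zero_iff, ne_eq, Nat.cast_eq_zero,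
      Nat.cast_ne_zero]
    constructor
    · rintro ⟨-, h⟩
      exact fun h0 => h (by rw [FormalMultilinearSeries.coeff_eq_zero]; exact h0)
    · intro h
      exact ⟨Nat.factorial_ne_zero n, fun h0 => h (FormalMultilinearSeries.coeff_eq_zero.mp h0)⟩
  refine ⟨(Function.swap dslope z)^[p.order] f,
    ⟨_, hp.has_fpower_series_iterate_dslope_fslope p.order⟩,
    hp.iterate_dslope_fslope_ne_zero hp0, ?_⟩
  rw [hzo]
  exact Filter.Eventually.of_forall fun w => by
    simpa [smul_eq_mul] using hp.eq_pow_order_mul_iterate_dslope w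

open Filter Topology in
lemma factor_one {U : Set ℂ} (hU : IsOpen U) {h : ℂ → ℂ} (hh : AnalyticOnNhd ℂ h U)
    {a : ℂ} {m : ℕ} {g : ℂ → ℂ} (hg : AnalyticAt ℂ g a)
    (hfac : ∀ᶠ w in 𝓝 a, h w = (w - a) ^ m * g w) :
    ∃ G : ℂ → ℂ, AnalyticOnNhd ℂ G U ∧ ∀ w, h w = (w - a) ^ m * G w := by
  classical
  refine ⟨fun w => if w = a then g a else h w / (w - a) ^ m, ?_, ?_⟩
  · intro b hb
    by_cases hba : b = a
    · rw [hba]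
      refine hg.congr ?_
      filter_upwards [hfac] with w hw
      by_cases hwa : w = a
      · simp [hwa]
      · simp only [if_neg hwa]
        rw [hw, mul_comm, mul_div_assoc,
          div_self (pow_ne_zero _ (sub_ne_zero.mpr hwa)), mul_one]
    · have han : AnalyticAt ℂ (fun w => h w / (w - a) ^ m) b :=
        (hh b hb).div ((analyticAt_id.sub analyticAt_const).pow m)
          (pow_ne_zero _ (sub_ne_zero.mpr hba))
      refine han.congr ?_
      have : ∀ᶠ w in 𝓝 b, w ≠ a := (isOpen_compl_singleton).eventually_mem hba
      filter_upwards [this] with w hw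
      simp [hw]
  · intro w
    by_cases hwa : w = a
    · subst hwa
      simpa using hfac.self_of_nhds
    · simp only [if_neg hwa]
      rw [mul_comm, div_mul_cancel₀ _ (pow_ne_zero _ (sub_ne_zero.mpr hwa))]

open Filter Topology in
lemma factor_finset {U : Set ℂ} (hU : IsOpen U) {f : ℂ → ℂ} (hf : AnalyticOnNhd ℂ f U)
    (m : ℂ → ℕ) (Z : Finset ℂ)
    (hZ : ∀ z ∈ Z, z ∈ U ∧ ∃ g, AnalyticAt ℂ g z ∧
      ∀ᶠ w in 𝓝 z, f w = (w - z) ^ (m z) * g w) :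
    ∃ G : ℂ → ℂ, AnalyticOnNhd ℂ G U ∧
      ∀ w, f w = (∏ z ∈ Z, (w - z) ^ (m z)) * G w := by
  classical
  induction Z using Finset.induction_on with
  | empty => exact ⟨f, hf, by simp⟩
  | @insert a Z' ha ih =>
    obtain ⟨G₁, hG₁, hfac₁⟩ := ih fun z hz => hZ z (Finset.mem_insert_of_mem hz)
    obtain ⟨haU, g, hg, hgfac⟩ := hZ a (Finset.mem_insert_self a Z')
    set P : ℂ → ℂ := fun w => ∏ z ∈ Z', (w - z) ^ (m z) with hPdef
    have hPa : ∀ x : ℂ, AnalyticAt ℂ P x := fun x =>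
      Finset.analyticAt_fun_prod _ fun z _ => (analyticAt_id.sub analyticAt_const).pow _
    have hPane : P a ≠ 0 := by
      rw [hPdef]
      refine Finset.prod_ne_zero_iff.mpr fun z hz => ?_
      exact pow_ne_zero _ (sub_ne_zero.mpr (by rintro rfl; exact ha hz))
    have hg₁ : ∀ᶠ w in 𝓝 a, G₁ w = (w - a) ^ (m a) * (g w / P w) := by
      have hPne : ∀ᶠ w in 𝓝 a, P w ≠ 0 := (hPa a).continuousAt.eventually_ne hPane
      filter_upwards [hgfac, hPne] with w h1 h2
      have h3 : P w * G₁ w = (w - a) ^ (m a) * g w := by rw [← hfac₁ w, h1]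
      field_simp
      linear_combination h3
    obtain ⟨G, hG, hfac⟩ := factor_one hU hG₁ (hg.div (hPa a) hPane) hg₁
    refine ⟨G, hG, fun w => ?_⟩
    rw [Finset.prod_insert ha, hfac₁ w, hfac w]
    ring

/-- Tijdeman's number-of-zeros lemma: for `f` analytic and not identically zero on the
closed disk of radius `(st+s+t)R`, the number of zeros of `f` counted with multiplicity
in the closed disk of radius `R` is at most
`(1/log s)(log max_{|z|≤(st+s+t)R} |f(z)| − log max_{|z|≤tR} |f(z)|)`. -/
theorem tijdeman_number_of_zeros
    (R s t : ℝ) (hR : 0 < R) (hs : 1 < s) (ht : 0 < t)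
    (f : ℂ → ℂ)
    (hf : ∀ z ∈ closedBall (0 : ℂ) ((s * t + s + t) * R), AnalyticAt ℂ f z)
    (hne : ∃ z ∈ closedBall (0 : ℂ) ((s * t + s + t) * R), f z ≠ 0) :
    ∀ Z : Finset ℂ, (∀ z ∈ Z, z ∈ closedBall (0 : ℂ) R ∧ f z = 0) →
      (∑ z ∈ Z, (zeroOrder f z : ℝ))
        ≤ (1 / Real.log s) *
          (Real.log (⨆ z : closedBall (0 : ℂ) ((s * t + s + t) * R), ‖f (z : ℂ)‖)
            - Real.log (⨆ z : closedBall (0 : ℂ) (t * R), ‖f (z : ℂ)‖)) := by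
  intro Z hZ
  classical
  set ρ : ℝ := (s * t + s + t) * R with hρdef
  set r : ℝ := t * R with hrdef
  have hs0 : (0:ℝ) < s := lt_trans one_pos hs
  have hr0 : 0 < r := mul_pos ht hR
  have hρ0 : 0 < ρ := by
    have : (0:ℝ) < s * t + s + t := by positivity
    exact mul_pos this hR
  have hRρ : R < ρ := by rw [hρdef]; nlinarith
  have hrρ : r < ρ := by rw [hrdef, hρdef]; nlinarith
  have hsub_r : closedBall (0:ℂ) r ⊆ closedBall (0:ℂ) ρ := closedBall_subset_closedBall hrρ.le
  have hsub_R : closedBall (0:ℂ) R ⊆ closedBall (0:ℂ) ρ := closedBall_subset_closedBall hRρ.le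
  have hA : AnalyticOnNhd ℂ f (closedBall (0:ℂ) ρ) := fun z hz => hf z hz
  have hpre : IsPreconnected (closedBall (0:ℂ) ρ) := (convex_closedBall _ _).isPreconnected
  have hnot : ¬ Set.EqOn f 0 (closedBall (0:ℂ) ρ) := by
    obtain ⟨z, hz, hzne⟩ := hne
    exact fun h => hzne (h hz)
  have hnev : ∀ z ∈ closedBall (0:ℂ) ρ, ¬ (∀ᶠ w in nhds z, f w = 0) := fun z hz h =>
    hnot (hA.eqOn_zero_of_preconnected_of_eventuallyEq_zero hpre hz h)
  -- maximum points
  have hcontρ : ContinuousOn (fun z => ‖f z‖) (closedBall (0:ℂ) ρ) := fun z hz =>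
    ((hf z hz).continuousAt.norm).continuousWithinAt
  obtain ⟨zρ, hzρ, hzρmax'⟩ :=
    (isCompact_closedBall (0:ℂ) ρ).exists_isMaxOn ⟨0, mem_closedBall_self hρ0.le⟩ hcontρ
  obtain ⟨zr, hzr, hzrmax'⟩ :=
    (isCompact_closedBall (0:ℂ) r).exists_isMaxOn ⟨0, mem_closedBall_self hr0.le⟩
      (hcontρ.mono hsub_r)
  have hzρmax : ∀ y ∈ closedBall (0:ℂ) ρ, ‖f y‖ ≤ ‖f zρ‖ := fun y hy => hzρmax' hy
  have hzrmax : ∀ y ∈ closedBall (0:ℂ) r, ‖f y‖ ≤ ‖f zr‖ := fun y hy => hzrmax' hy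
  set Mρ : ℝ := ‖f zρ‖ with hMρdef
  set Mr : ℝ := ‖f zr‖ with hMrdef
  have hMr_pos : 0 < Mr := by
    rcases (norm_nonneg (f zr)).lt_or_eq with h | h
    · exact h
    · exfalso
      refine hnev 0 (mem_closedBall_self hρ0.le) ?_
      have hz0 : ∀ w ∈ closedBall (0:ℂ) r, f w = 0 := by
        intro w hw
        have h2 := hzrmax w hw
        rw [hMrdef, ← h] at h2
        exact norm_le_zero_iff.mp h2
      filter_upwards [closedBall_mem_nhds (0:ℂ) hr0] with w hw using hz0 w hw
  have hMρ_pos : 0 < Mρ := lt_of_lt_of_le hMr_pos (hzρmax zr (hsub_r hzr))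
  -- identify the suprema
  haveI hneρ : Nonempty ↥(closedBall (0:ℂ) ρ) := ⟨⟨0, mem_closedBall_self hρ0.le⟩⟩
  haveI hner : Nonempty ↥(closedBall (0:ℂ) r) := ⟨⟨0, mem_closedBall_self hr0.le⟩⟩
  have hSρ : (⨆ z : closedBall (0:ℂ) ρ, ‖f (z:ℂ)‖) = Mρ := by
    refine le_antisymm (ciSup_le fun z => hzρmax z z.2) ?_
    exact le_ciSup (f := fun z : closedBall (0:ℂ) ρ => ‖f (z:ℂ)‖)
      ⟨Mρ, by rintro x ⟨z, rfl⟩; exact hzρmax z z.2⟩ ⟨zρ, hzρ⟩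
  have hSr : (⨆ z : closedBall (0:ℂ) r, ‖f (z:ℂ)‖) = Mr := by
    refine le_antisymm (ciSup_le fun z => hzrmax z z.2) ?_
    exact le_ciSup (f := fun z : closedBall (0:ℂ) r => ‖f (z:ℂ)‖)
      ⟨Mr, by rintro x ⟨z, rfl⟩; exact hzrmax z z.2⟩ ⟨zr, hzr⟩
  -- global factorization
  set m : ℂ → ℕ := fun z => zeroOrder f z with hmdef
  set U : Set ℂ := {w | AnalyticAt ℂ f w} with hUdef
  have hUopen : IsOpen U := isOpen_analyticAt ℂ f
  have hballU : closedBall (0:ℂ) ρ ⊆ U := fun z hz => hf z hz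
  have hfacpt : ∀ z ∈ Z, z ∈ U ∧ ∃ g, AnalyticAt ℂ g z ∧
      ∀ᶠ w in nhds z, f w = (w - z) ^ (m z) * g w := by
    intro z hz
    have hzball : z ∈ closedBall (0:ℂ) ρ := hsub_R (hZ z hz).1
    obtain ⟨g, hg, _, hfac⟩ := zeroOrder_spec (hf z hzball) (hnev z hzball)
    exact ⟨hf z hzball, g, hg, hfac⟩
  obtain ⟨G, hG, hfacG⟩ := factor_finset hUopen (fun z hz => hz) m Z hfacpt
  set N : ℕ := ∑ z ∈ Z, m z with hNdef
  -- the auxiliary function H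
  set H : ℂ → ℂ := fun w => G w * ∏ z ∈ Z, (((ρ:ℂ))^2 - (starRingEnd ℂ) z * w) ^ (m z)
    with hHdef
  have hHan : ∀ w ∈ closedBall (0:ℂ) ρ, AnalyticAt ℂ H w := fun w hw =>
    (hG w (hballU hw)).mul (Finset.analyticAt_fun_prod _ fun z _ =>
      (analyticAt_const.sub (analyticAt_const.mul analyticAt_id)).pow _)
  have hHd : DiffContOnCl ℂ H (ball (0:ℂ) ρ) := by
    constructor
    · exact fun w hw =>
        ((hHan w (ball_subset_closedBall hw)).differentiableAt).differentiableWithinAt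
    · rw [closure_ball _ hρ0.ne']
      exact fun w hw => (hHan w hw).continuousAt.continuousWithinAt
  -- frontier bound
  have hfront : ∀ w ∈ frontier (ball (0:ℂ) ρ), ‖H w‖ ≤ ρ ^ N * Mρ := by
    intro w hw
    rw [frontier_ball _ hρ0.ne'] at hw
    have hwn : ‖w‖ = ρ := mem_sphere_zero_iff_norm.mp hw
    have hwρ : w ∈ closedBall (0:ℂ) ρ := sphere_subset_closedBall hw
    have hkey : ∀ z ∈ Z, ‖(((ρ:ℂ))^2 - (starRingEnd ℂ) z * w)‖ = ρ * ‖w - z‖ := by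
      intro z _
      have hww : w * (starRingEnd ℂ) w = (((ρ:ℝ)^2 : ℝ) : ℂ) := by
        rw [Complex.mul_conj]
        norm_cast
        rw [Complex.normSq_eq_norm_sq, hwn]
      have hid : ((ρ:ℂ))^2 - (starRingEnd ℂ) z * w = w * (starRingEnd ℂ) (w - z) := by
        rw [map_sub, mul_sub, hww]
        push_cast
        ring
      rw [hid, norm_mul, hwn]
      congr 1
      exact (RCLike.norm_conj _)
    have hHval : ‖H w‖ = ρ ^ N * ‖f w‖ := by
      rw [hHdef]
      simp only [norm_mul, norm_prod, norm_pow]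
      calc ‖G w‖ * ∏ z ∈ Z, ‖((ρ:ℂ))^2 - (starRingEnd ℂ) z * w‖ ^ (m z)
          = ‖G w‖ * ∏ z ∈ Z, (ρ * ‖w - z‖) ^ (m z) := by
            congr 1
            exact Finset.prod_congr rfl fun z hz => by rw [hkey z hz]
        _ = ρ ^ N * (‖G w‖ * ∏ z ∈ Z, ‖w - z‖ ^ (m z)) := by
            simp only [mul_pow, Finset.prod_mul_distrib, Finset.prod_pow_eq_pow_sum]
            ring
        _ = ρ ^ N * ‖f w‖ := by
            rw [hfacG w, norm_mul, norm_prod]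
            simp only [norm_pow]
            ring
    rw [hHval]
    exact mul_le_mul_of_nonneg_left (hzρmax w hwρ) (pow_nonneg hρ0.le N)
  -- maximum modulus at zr
  have hzrcl : zr ∈ closure (ball (0:ℂ) ρ) := by
    rw [closure_ball _ hρ0.ne']
    exact hsub_r hzr
  have hHzr : ‖H zr‖ ≤ ρ ^ N * Mρ :=
    Complex.norm_le_of_forall_mem_frontier_norm_le isBounded_ball hHd hfront hzrcl
  have hzrZ : zr ∉ Z := by
    intro hmem
    have := (hZ zr hmem).2
    rw [hMrdef, this, norm_zero] at hMr_pos
    exact lt_irrefl _ hMr_pos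
  have hnorm_r : ‖zr‖ ≤ r := mem_closedBall_zero_iff.mp hzr
  have hkey2 : ∀ z ∈ Z, s * ρ * ‖zr - z‖ ≤ ‖((ρ:ℂ))^2 - (starRingEnd ℂ) z * zr‖ := by
    intro z hz
    have hzR : ‖z‖ ≤ R := mem_closedBall_zero_iff.mp (hZ z hz).1
    have h1 : ‖zr - z‖ ≤ (t + 1) * R := by
      refine le_trans (norm_sub_le _ _) ?_
      rw [hrdef] at hnorm_r
      nlinarith
    have h2 : ρ^2 - R * r ≤ ‖((ρ:ℂ))^2 - (starRingEnd ℂ) z * zr‖ := by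
      have hb : ‖(starRingEnd ℂ) z * zr‖ ≤ R * r := by
        rw [norm_mul, RCLike.norm_conj]
        exact mul_le_mul hzR hnorm_r (norm_nonneg _) hR.le
      have hn2 : ‖(((ρ:ℝ)^2 : ℝ) : ℂ)‖ = ρ^2 := by
        rw [Complex.norm_real, Real.norm_eq_abs, abs_of_pos (by positivity)]
      calc ρ^2 - R * r ≤ ‖(((ρ:ℝ)^2:ℝ):ℂ)‖ - ‖(starRingEnd ℂ) z * zr‖ := by
            rw [hn2]; linarith
        _ ≤ ‖(((ρ:ℝ)^2:ℝ):ℂ) - (starRingEnd ℂ) z * zr‖ := norm_sub_norm_le _ _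
        _ = ‖((ρ:ℂ))^2 - (starRingEnd ℂ) z * zr‖ := by push_cast; ring_nf
    have h3 : s * ρ * ((t + 1) * R) ≤ ρ^2 - R * r := by
      rw [hρdef, hrdef]
      nlinarith [mul_pos ht (sub_pos.mpr hs), sq_nonneg R, mul_pos hR hR]
    calc s * ρ * ‖zr - z‖ ≤ s * ρ * ((t + 1) * R) := by
          refine mul_le_mul_of_nonneg_left h1 (by positivity)
      _ ≤ ρ^2 - R * r := h3
      _ ≤ _ := h2
  -- combine
  have hmain : (s * ρ) ^ N * Mr ≤ ρ ^ N * Mρ := by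
    have e1 : (s * ρ) ^ N * Mr = ‖G zr‖ * ∏ z ∈ Z, (s * ρ * ‖zr - z‖) ^ (m z) := by
      rw [hMrdef, hfacG zr, norm_mul, norm_prod]
      simp only [norm_pow, mul_pow, Finset.prod_mul_distrib, Finset.prod_pow_eq_pow_sum]
      rw [← hNdef]
      ring
    have e2 : ‖G zr‖ * ∏ z ∈ Z, (s * ρ * ‖zr - z‖) ^ (m z)
        ≤ ‖G zr‖ * ∏ z ∈ Z, ‖((ρ:ℂ))^2 - (starRingEnd ℂ) z * zr‖ ^ (m z) := by
      refine mul_le_mul_of_nonneg_left ?_ (norm_nonneg _)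
      refine Finset.prod_le_prod (fun z _ => by positivity) (fun z hz => ?_)
      exact pow_le_pow_left₀ (by positivity) (hkey2 z hz) _
    have e3 : ‖G zr‖ * ∏ z ∈ Z, ‖((ρ:ℂ))^2 - (starRingEnd ℂ) z * zr‖ ^ (m z) = ‖H zr‖ := by
      rw [hHdef]
      simp only [norm_mul, norm_prod, norm_pow]
    rw [e1]
    calc ‖G zr‖ * ∏ z ∈ Z, (s * ρ * ‖zr - z‖) ^ (m z)
        ≤ ‖H zr‖ := by rw [← e3]; exact e2
      _ ≤ ρ ^ N * Mρ := hHzr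
  have hsN : s ^ N * Mr ≤ Mρ := by
    have hρN : (0:ℝ) < ρ ^ N := pow_pos hρ0 N
    have h4 : s ^ N * Mr * ρ ^ N ≤ Mρ * ρ ^ N := by
      have : (s * ρ) ^ N = s ^ N * ρ ^ N := mul_pow s ρ N
      nlinarith [hmain]
    exact le_of_mul_le_mul_right h4 hρN
  -- conclude with logarithms
  have hlogs : 0 < Real.log s := Real.log_pos hs
  rw [hSρ, hSr]
  have hcast : (∑ z ∈ Z, (zeroOrder f z : ℝ)) = (N : ℝ) := by
    rw [hNdef, hmdef]
    push_cast
    rfl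
  rw [hcast, one_div, inv_mul_eq_div, le_div_iff₀ hlogs]
  have hlog1 : Real.log (s ^ N * Mr) ≤ Real.log Mρ :=
    Real.log_le_log (by positivity) hsN
  rw [Real.log_mul (by positivity) hMr_pos.ne', Real.log_pow] at hlog1
  push_cast
  linarith
end

section
/- Relative entropy identity for the KKT function: Let 0 < σ₁ < σ₂, let X* be a random variable with |X*| ≤ A a.s., and let f_{Y₁}(y) = E[φ_{σ₁}(y − X*)], f_{Y₂}(y) = E[φ_{σ₂}(y − X*)]. Then for every x ∈ ℝ, D(φ_{σ₁}(· − x) ‖ f_{Y₁}) − D(φ_{σ₂}(· − x) ‖ f_{Y₂}) = E[g(x + N₁)] + log(σ₂/σ₁), where N₁ ~ N(0,σ₁²), g(y) = E[log(f_{Y₂}(y + N)/f_{Y₁}(y))], and N ~ N(0, σ₂² − σ₁²) independent of N₁. -/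
open MeasureTheory Real

/-- The Kullback–Leibler divergence between densities `p` and `q` on `ℝ`. -/
noncomputable def klDivPdf (p q : ℝ → ℝ) : ℝ :=
  ∫ y, p y * Real.log (p y / q y)

namespace KKTAux

lemma norm_pos {σ : ℝ} (hσ : 0 < σ) : 0 < Real.sqrt (2 * π * σ ^ 2) :=
  Real.sqrt_pos.2 (by positivity)

lemma gaussPdf_pos {σ : ℝ} (hσ : 0 < σ) (t : ℝ) : 0 < gaussPdf σ t := by
  unfold gaussPdf
  have := norm_pos hσ
  positivity

lemma gaussPdf_le {σ : ℝ} (hσ : 0 < σ) (t : ℝ) :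
    gaussPdf σ t ≤ (Real.sqrt (2 * π * σ ^ 2))⁻¹ := by
  unfold gaussPdf
  have h := norm_pos hσ
  nth_rewrite 2 [← mul_one (Real.sqrt (2 * π * σ ^ 2))⁻¹]
  have hexp : Real.exp (-(t ^ 2) / (2 * σ ^ 2)) ≤ 1 := by
    rw [Real.exp_le_one_iff]
    apply div_nonpos_of_nonpos_of_nonneg
    · simpa using sq_nonneg t
    · positivity
  exact mul_le_mul_of_nonneg_left hexp (inv_nonneg.2 h.le)

lemma continuous_gaussPdf (σ : ℝ) : Continuous (gaussPdf σ) := by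
  unfold gaussPdf
  fun_prop

lemma gaussPdf_eq (σ t : ℝ) :
    gaussPdf σ t = (Real.sqrt (2 * π * σ ^ 2))⁻¹ * Real.exp (-(1 / (2 * σ ^ 2)) * t ^ 2) := by
  unfold gaussPdf; ring_nf

lemma gaussPdf_funext (σ : ℝ) :
    gaussPdf σ = fun t => (Real.sqrt (2 * π * σ ^ 2))⁻¹ * Real.exp (-(1 / (2 * σ ^ 2)) * t ^ 2) :=
  funext (gaussPdf_eq σ)

lemma integrable_gaussPdf {σ : ℝ} (hσ : 0 < σ) : Integrable (gaussPdf σ) := by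
  rw [gaussPdf_funext]
  exact (integrable_exp_neg_mul_sq (by positivity)).const_mul _

lemma integral_gaussPdf {σ : ℝ} (hσ : 0 < σ) : ∫ t, gaussPdf σ t = 1 := by
  simp_rw [gaussPdf_eq]
  rw [integral_const_mul, integral_gaussian]
  have h2 : π / (1 / (2 * σ ^ 2)) = 2 * π * σ ^ 2 := by
    field_simp
  rw [h2, inv_mul_cancel₀ (norm_pos hσ).ne']

lemma integrable_sq_gaussPdf {σ : ℝ} (hσ : 0 < σ) :
    Integrable (fun t => t ^ 2 * gaussPdf σ t) := by
  simp_rw [gaussPdf_eq, mul_comm ((Real.sqrt (2 * π * σ ^ 2))⁻¹), ← mul_assoc]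
  refine Integrable.mul_const ?_ _
  have h := integrable_rpow_mul_exp_neg_mul_sq (b := 1 / (2 * σ ^ 2)) (by positivity)
      (by norm_num : (-1 : ℝ) < 2)
  simpa [Real.rpow_natCast] using h

lemma integral_sq_exp {b : ℝ} (hb : 0 < b) :
    ∫ t : ℝ, t ^ 2 * Real.exp (-b * t ^ 2) = Real.sqrt π / (2 * b ^ (3/2 : ℝ)) := by
  have h : (fun t : ℝ => t ^ 2 * Real.exp (-b * t ^ 2))
      = fun t : ℝ => |t| ^ (2:ℝ) * Real.exp (-b * |t| ^ 2) := by
    funext t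
    have h2 : |t| ^ (2:ℝ) = t ^ 2 := by
      rw [show (2:ℝ) = ((2:ℕ):ℝ) by norm_num, Real.rpow_natCast, sq_abs]
    rw [h2, sq_abs]
  rw [h, integral_comp_abs (f := fun t : ℝ => t ^ (2:ℝ) * Real.exp (-b * t ^ 2))]
  have e1 : ∫ x in Set.Ioi (0:ℝ), x ^ (2:ℝ) * Real.exp (-b * x ^ (2:ℕ))
      = ∫ x in Set.Ioi (0:ℝ), x ^ (2:ℝ) * Real.exp (-b * x ^ (2:ℝ)) := by
    congr 1
    funext x
    congr 1
    rw [show (2:ℝ) = ((2:ℕ):ℝ) by norm_num, Real.rpow_natCast]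
  rw [e1, integral_rpow_mul_exp_neg_mul_rpow two_pos (by norm_num) hb]
  have hg : Real.Gamma (3/2 : ℝ) = Real.sqrt π / 2 := by
    have h32 : (3/2 : ℝ) = 1/2 + 1 := by norm_num
    rw [h32, Real.Gamma_add_one (by norm_num), Real.Gamma_one_half_eq]
    ring
  rw [show ((2:ℝ) + 1) / 2 = (3/2 : ℝ) by norm_num, hg,
    show (-(2+1)/2 : ℝ) = -(3/2 : ℝ) by norm_num, Real.rpow_neg hb.le]
  have hb32 : (0:ℝ) < b ^ (3/2 : ℝ) := Real.rpow_pos_of_pos hb _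
  field_simp

lemma integral_sq_gaussPdf {σ : ℝ} (hσ : 0 < σ) :
    ∫ t, t ^ 2 * gaussPdf σ t = σ ^ 2 := by
  have hcong : (fun t : ℝ => t ^ 2 * gaussPdf σ t)
      = fun t : ℝ => (Real.sqrt (2 * π * σ ^ 2))⁻¹
          * (t ^ 2 * Real.exp (-(1 / (2 * σ ^ 2)) * t ^ 2)) := by
    funext t; rw [gaussPdf_eq]; ring
  rw [hcong, integral_const_mul, integral_sq_exp (by positivity)]
  have hs2 : (0:ℝ) < 2 * σ ^ 2 := by positivity
  have h1 : ((1:ℝ)/(2*σ^2)) ^ (3/2:ℝ) = ((2*σ^2) ^ (3/2:ℝ))⁻¹ := by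
    rw [one_div, ← Real.rpow_neg_one, ← Real.rpow_mul hs2.le,
      show ((-1) * (3/2) : ℝ) = -(3/2 : ℝ) by norm_num, Real.rpow_neg hs2.le]
  have h2 : (2*σ^2:ℝ) ^ (3/2:ℝ) = (2*σ^2) * Real.sqrt (2*σ^2) := by
    rw [show (3/2:ℝ) = 1 + 1/2 by norm_num, Real.rpow_add hs2, Real.rpow_one,
      ← Real.sqrt_eq_rpow]
  have h3 : Real.sqrt (2*π*σ^2) = Real.sqrt π * Real.sqrt (2*σ^2) := by
    rw [show 2*π*σ^2 = π*(2*σ^2) by ring, Real.sqrt_mul pi_pos.le]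
  rw [h1, h2, h3]
  have hπ : (0:ℝ) < Real.sqrt π := Real.sqrt_pos.2 pi_pos
  have hq : (0:ℝ) < Real.sqrt (2*σ^2) := Real.sqrt_pos.2 hs2
  field_simp

lemma log_gaussPdf {σ : ℝ} (hσ : 0 < σ) (t : ℝ) :
    Real.log (gaussPdf σ t) = -Real.log (Real.sqrt (2*π*σ^2)) - t^2/(2*σ^2) := by
  unfold gaussPdf
  rw [Real.log_mul (by positivity) (Real.exp_ne_zero _), Real.log_inv, Real.log_exp]
  ring
  -- note: (√(2πσ²))⁻¹ ≠ 0 since norm_pos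

lemma integral_gaussPdf_mul_log {σ : ℝ} (hσ : 0 < σ) :
    ∫ t, gaussPdf σ t * Real.log (gaussPdf σ t)
      = -Real.log (Real.sqrt (2*π*σ^2)) - 1/2 := by
  have hcong : (fun t => gaussPdf σ t * Real.log (gaussPdf σ t))
      = fun t => (-Real.log (Real.sqrt (2*π*σ^2))) * gaussPdf σ t
          - (1/(2*σ^2)) * (t^2 * gaussPdf σ t) := by
    funext t
    rw [log_gaussPdf hσ]
    ring
  rw [hcong, integral_sub (((integrable_gaussPdf hσ).const_mul _))
      ((integrable_sq_gaussPdf hσ).const_mul _), integral_const_mul, integral_const_mul,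
    integral_gaussPdf hσ, integral_sq_gaussPdf hσ]
  field_simp

lemma gaussPdf_le_of_abs_le {σ : ℝ} (hσ : 0 < σ) {s t : ℝ} (h : |s| ≤ |t|) :
    gaussPdf σ t ≤ gaussPdf σ s := by
  unfold gaussPdf
  have h2 : t^2 ≥ s^2 := by
    rw [← sq_abs s, ← sq_abs t]
    exact pow_le_pow_left₀ (abs_nonneg s) h 2
  have := norm_pos hσ
  apply mul_le_mul_of_nonneg_left _ (by positivity)
  apply Real.exp_le_exp.2
  rw [div_le_div_iff₀ (by positivity) (by positivity)]
  nlinarith [sq_nonneg σ]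

lemma gaussPdf_mul (a b : ℝ) (ha : 0 < a) (hb : 0 < b) (u n : ℝ) :
    gaussPdf a n * gaussPdf b (u - n)
      = gaussPdf (Real.sqrt (a^2+b^2)) u
        * gaussPdf (a*b/Real.sqrt (a^2+b^2)) (n - a^2*u/(a^2+b^2)) := by
  have hab : (0:ℝ) < a^2 + b^2 := by positivity
  set c := Real.sqrt (a^2+b^2) with hcdef
  have hc : 0 < c := Real.sqrt_pos.2 hab
  have hc2 : c^2 = a^2+b^2 := Real.sq_sqrt hab.le
  have hd : (a*b/c)^2 = a^2*b^2/(a^2+b^2) := by rw [div_pow, mul_pow, hc2]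
  unfold gaussPdf
  rw [mul_mul_mul_comm, ← Real.exp_add, mul_mul_mul_comm, ← Real.exp_add]
  congr 1
  · rw [← mul_inv, ← mul_inv, ← Real.sqrt_mul (by positivity), ← Real.sqrt_mul (by positivity)]
    congr 2
    rw [hd, hc2]
    field_simp
  · congr 1
    rw [hd, hc2]
    field_simp
    ring

lemma integral_gaussPdf_conv {a b : ℝ} (ha : 0 < a) (hb : 0 < b) (u : ℝ) :
    ∫ n, gaussPdf a n * gaussPdf b (u - n) = gaussPdf (Real.sqrt (a^2+b^2)) u := by
  have hab : (0:ℝ) < a^2 + b^2 := by positivity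
  have hc : 0 < Real.sqrt (a^2+b^2) := Real.sqrt_pos.2 hab
  have hd : 0 < a*b/Real.sqrt (a^2+b^2) := by positivity
  simp_rw [gaussPdf_mul a b ha hb u]
  rw [integral_const_mul,
    integral_sub_right_eq_self (gaussPdf (a*b/Real.sqrt (a^2+b^2))) (a^2*u/(a^2+b^2)),
    integral_gaussPdf hd, mul_one]

section fY

variable {σ A : ℝ} {μ : Measure ℝ} [IsProbabilityMeasure μ]

lemma integrable_gauss_shift (hσ : 0 < σ) (y : ℝ) :
    Integrable (fun x => gaussPdf σ (y - x)) μ := by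
  apply Integrable.mono' (integrable_const ((Real.sqrt (2*π*σ^2))⁻¹))
  · exact ((continuous_gaussPdf σ).comp (continuous_const.sub continuous_id)).aestronglyMeasurable
  · exact ae_of_all _ fun x => by
      rw [Real.norm_eq_abs, abs_of_pos (gaussPdf_pos hσ _)]; exact gaussPdf_le hσ _

lemma fY_le (hσ : 0 < σ) (y : ℝ) :
    (∫ x, gaussPdf σ (y - x) ∂μ) ≤ (Real.sqrt (2*π*σ^2))⁻¹ := by
  calc (∫ x, gaussPdf σ (y - x) ∂μ) ≤ ∫ _, (Real.sqrt (2*π*σ^2))⁻¹ ∂μ :=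
        integral_mono (integrable_gauss_shift hσ y) (integrable_const _)
          (fun x => gaussPdf_le hσ _)
    _ = (Real.sqrt (2*π*σ^2))⁻¹ := by simp

lemma fY_lb (hσ : 0 < σ) (hA : 0 ≤ A) (hμ : ∀ᵐ x ∂μ, |x| ≤ A) (y : ℝ) :
    gaussPdf σ (|y| + A) ≤ ∫ x, gaussPdf σ (y - x) ∂μ := by
  have hae : ∀ᵐ x ∂μ, gaussPdf σ (|y|+A) ≤ gaussPdf σ (y-x) := by
    filter_upwards [hμ] with x hx
    apply gaussPdf_le_of_abs_le hσ
    rw [abs_of_nonneg (by positivity : (0:ℝ) ≤ |y| + A)]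
    calc |y - x| ≤ |y| + |x| := abs_sub _ _
      _ ≤ |y| + A := by linarith
  calc gaussPdf σ (|y|+A) = ∫ _, gaussPdf σ (|y|+A) ∂μ := by simp
    _ ≤ ∫ x, gaussPdf σ (y - x) ∂μ :=
        integral_mono_ae (integrable_const _) (integrable_gauss_shift hσ y) hae

lemma fY_pos (hσ : 0 < σ) (hA : 0 ≤ A) (hμ : ∀ᵐ x ∂μ, |x| ≤ A) (y : ℝ) :
    0 < ∫ x, gaussPdf σ (y - x) ∂μ :=
  lt_of_lt_of_le (gaussPdf_pos hσ _) (fY_lb hσ hA hμ y)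

lemma continuous_fY (hσ : 0 < σ) :
    Continuous (fun y => ∫ x, gaussPdf σ (y - x) ∂μ) := by
  apply continuous_of_dominated
    (bound := fun _ => (Real.sqrt (2*π*σ^2))⁻¹)
  · exact fun y => ((continuous_gaussPdf σ).comp
      (continuous_const.sub continuous_id)).aestronglyMeasurable
  · exact fun y => ae_of_all _ fun x => by
      rw [Real.norm_eq_abs, abs_of_pos (gaussPdf_pos hσ _)]; exact gaussPdf_le hσ _
  · exact integrable_const _
  · exact ae_of_all _ fun x =>
      (continuous_gaussPdf σ).comp (continuous_id.sub continuous_const)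

lemma abs_log_fY_le (hσ : 0 < σ) (hA : 0 ≤ A) (hμ : ∀ᵐ x ∂μ, |x| ≤ A) (y : ℝ) :
    |Real.log (∫ x, gaussPdf σ (y - x) ∂μ)|
      ≤ (|Real.log (Real.sqrt (2*π*σ^2))| + A^2/σ^2) + (1/σ^2) * y^2 := by
  set c := Real.sqrt (2*π*σ^2) with hc
  have hcpos : 0 < c := norm_pos hσ
  set f := ∫ x, gaussPdf σ (y - x) ∂μ with hf
  have hfpos : 0 < f := fY_pos hσ hA hμ y
  have hy2 : (0:ℝ) ≤ y^2/σ^2 := by positivity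
  have hA2 : (0:ℝ) ≤ A^2/σ^2 := by positivity
  rw [abs_le]
  constructor
  · -- lower bound
    have h1 : Real.log (gaussPdf σ (|y|+A)) ≤ Real.log f :=
      Real.log_le_log (gaussPdf_pos hσ _) (fY_lb hσ hA hμ y)
    rw [log_gaussPdf hσ] at h1
    have h2 : (|y|+A)^2 ≤ 2*y^2 + 2*A^2 := by nlinarith [sq_nonneg (|y| - A), sq_abs y]
    have h3 : (|y|+A)^2/(2*σ^2) ≤ y^2/σ^2 + A^2/σ^2 := by
      rw [div_le_iff₀ (by positivity)]
      have he : (y^2/σ^2 + A^2/σ^2) * (2*σ^2) = 2*y^2 + 2*A^2 := by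
        field_simp
      rw [he]; exact h2
    have h4 : Real.log c ≤ |Real.log c| := le_abs_self _
    have : y^2/σ^2 = (1/σ^2) * y^2 := by ring
    linarith
  · -- upper bound
    have h1 : Real.log f ≤ Real.log c⁻¹ := Real.log_le_log hfpos (fY_le hσ y)
    rw [Real.log_inv] at h1
    have h4 : -Real.log c ≤ |Real.log c| := neg_le_abs _
    have : (0:ℝ) ≤ (1/σ^2) * y^2 := by positivity
    linarith

/-- Generic integrability of `log (f (x+n)) * gaussPdf τ n` for `f` with
quadratically bounded log. -/
lemma integrable_log_mul_gauss {f : ℝ → ℝ} (hf : Continuous f) (hpos : ∀ y, 0 < f y)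
    {C c : ℝ} (hc : 0 ≤ c) (hlog : ∀ y, |Real.log (f y)| ≤ C + c * y^2)
    {τ : ℝ} (hτ : 0 < τ) (x : ℝ) :
    Integrable (fun n => Real.log (f (x + n)) * gaussPdf τ n) := by
  have hmeas : Continuous fun n => Real.log (f (x + n)) * gaussPdf τ n := by
    apply Continuous.mul _ (continuous_gaussPdf τ)
    exact (hf.comp (continuous_const.add continuous_id)).log fun n => (hpos _).ne'
  apply Integrable.mono'
    (g := fun n => (C + 2*c*x^2) * gaussPdf τ n + (2*c) * (n^2 * gaussPdf τ n))
    (((integrable_gaussPdf hτ).const_mul _).add ((integrable_sq_gaussPdf hτ).const_mul _))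
    hmeas.aestronglyMeasurable
  refine ae_of_all _ fun n => ?_
  rw [Real.norm_eq_abs, abs_mul, abs_of_pos (gaussPdf_pos hτ _)]
  have h1 : |Real.log (f (x + n))| ≤ (C + 2*c*x^2) + (2*c) * n^2 := by
    have := hlog (x + n)
    nlinarith [sq_nonneg (x - n), sq_nonneg (x + n)]
  calc |Real.log (f (x + n))| * gaussPdf τ n
      ≤ ((C + 2*c*x^2) + (2*c) * n^2) * gaussPdf τ n :=
        mul_le_mul_of_nonneg_right h1 (gaussPdf_pos hτ _).le
    _ = (C + 2*c*x^2) * gaussPdf τ n + (2*c) * (n^2 * gaussPdf τ n) := by ring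

end fY

lemma integrable_gauss_mul_log {σ : ℝ} (hσ : 0 < σ) :
    Integrable (fun t => gaussPdf σ t * Real.log (gaussPdf σ t)) := by
  have hcong : (fun t => gaussPdf σ t * Real.log (gaussPdf σ t))
      = fun t => (-Real.log (Real.sqrt (2*π*σ^2))) * gaussPdf σ t
          - (1/(2*σ^2)) * (t^2 * gaussPdf σ t) := by
    funext t
    rw [log_gaussPdf hσ]
    ring
  rw [hcong]
  exact ((integrable_gaussPdf hσ).const_mul _).sub ((integrable_sq_gaussPdf hσ).const_mul _)

lemma klDiv_gauss_eval {σ : ℝ} (hσ : 0 < σ) {f : ℝ → ℝ} {x : ℝ}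
    (hpos : ∀ y, 0 < f y)
    (hint : Integrable (fun n => Real.log (f (x + n)) * gaussPdf σ n)) :
    klDivPdf (fun y => gaussPdf σ (y - x)) f
      = (-Real.log (Real.sqrt (2*π*σ^2)) - 1/2)
        - ∫ n, Real.log (f (x + n)) * gaussPdf σ n := by
  unfold klDivPdf
  have hsplit : (fun y => gaussPdf σ (y-x) * Real.log (gaussPdf σ (y-x) / f y))
      = fun y => (fun t => gaussPdf σ t * Real.log (gaussPdf σ t)) (y - x)
          - (fun n => Real.log (f (x + n)) * gaussPdf σ n) (y - x) := by
    funext y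
    simp only
    rw [Real.log_div (gaussPdf_pos hσ _).ne' (hpos y).ne', show x + (y - x) = y by ring]
    ring
  rw [hsplit, integral_sub ((integrable_gauss_mul_log hσ).comp_sub_right x)
      (hint.comp_sub_right x),
    integral_sub_right_eq_self (fun t => gaussPdf σ t * Real.log (gaussPdf σ t)) x,
    integral_sub_right_eq_self (fun n => Real.log (f (x + n)) * gaussPdf σ n) x,
    integral_gaussPdf_mul_log hσ]

lemma integrable_gauss_pair {σ τ : ℝ} (hσ : 0 < σ) (hτ : 0 < τ) (u : ℝ) :
    Integrable (fun n => gaussPdf σ n * gaussPdf τ (u - n)) := by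
  apply Integrable.mono' ((integrable_gaussPdf hσ).mul_const ((Real.sqrt (2*π*τ^2))⁻¹))
  · exact (((continuous_gaussPdf σ).mul ((continuous_gaussPdf τ).comp
      (continuous_const.sub continuous_id)))).aestronglyMeasurable
  · refine ae_of_all _ fun n => ?_
    rw [Real.norm_eq_abs, abs_of_pos (mul_pos (gaussPdf_pos hσ _) (gaussPdf_pos hτ _))]
    exact mul_le_mul_of_nonneg_left (gaussPdf_le hτ _) (gaussPdf_pos hσ _).le

lemma gauss_prod_integrable {σ τ : ℝ} (hσ : 0 < σ) (hτ : 0 < τ) {L : ℝ → ℝ}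
    (hL : Continuous L)
    (hint : Integrable (fun u => L u * gaussPdf (Real.sqrt (σ^2+τ^2)) u)) :
    Integrable (fun p : ℝ × ℝ => L p.1 * (gaussPdf σ p.2 * gaussPdf τ (p.1 - p.2)))
      ((volume : Measure ℝ).prod volume) := by
  have hmeas : AEStronglyMeasurable
      (fun p : ℝ × ℝ => L p.1 * (gaussPdf σ p.2 * gaussPdf τ (p.1 - p.2)))
      ((volume : Measure ℝ).prod volume) := by
    apply Continuous.aestronglyMeasurable
    exact (hL.comp continuous_fst).mul
      (((continuous_gaussPdf σ).comp continuous_snd).mul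
        ((continuous_gaussPdf τ).comp (continuous_fst.sub continuous_snd)))
  rw [integrable_prod_iff hmeas]
  constructor
  · refine ae_of_all _ fun u => ?_
    simpa using (integrable_gauss_pair hσ hτ u).const_mul (L u)
  · have hnorm : (fun u => ∫ n, ‖L u * (gaussPdf σ n * gaussPdf τ (u - n))‖)
        = fun u => |L u| * gaussPdf (Real.sqrt (σ^2+τ^2)) u := by
      funext u
      have : (fun n => ‖L u * (gaussPdf σ n * gaussPdf τ (u - n))‖)
          = fun n => |L u| * (gaussPdf σ n * gaussPdf τ (u - n)) := by
        funext n
        rw [Real.norm_eq_abs, abs_mul,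
          abs_of_pos (mul_pos (gaussPdf_pos hσ _) (gaussPdf_pos hτ _))]
      rw [this, integral_const_mul, integral_gaussPdf_conv hσ hτ]
    rw [hnorm]
    have : (fun u => |L u| * gaussPdf (Real.sqrt (σ^2+τ^2)) u)
        = fun u => ‖L u * gaussPdf (Real.sqrt (σ^2+τ^2)) u‖ := by
      funext u
      have hc : 0 < Real.sqrt (σ^2+τ^2) := Real.sqrt_pos.2 (by positivity)
      rw [Real.norm_eq_abs, abs_mul, abs_of_pos (gaussPdf_pos hc _)]
    rw [this]
    exact hint.norm

lemma fubini_conv {σ τ : ℝ} (hσ : 0 < σ) (hτ : 0 < τ) {L : ℝ → ℝ}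
    (hL : Continuous L)
    (hint : Integrable (fun u => L u * gaussPdf (Real.sqrt (σ^2+τ^2)) u)) :
    ∫ n, (∫ u, L u * gaussPdf τ (u - n)) * gaussPdf σ n
      = ∫ u, L u * gaussPdf (Real.sqrt (σ^2+τ^2)) u := by
  have hG := gauss_prod_integrable hσ hτ hL hint
  have step1 : (fun n => (∫ u, L u * gaussPdf τ (u - n)) * gaussPdf σ n)
      = fun n => ∫ u, L u * (gaussPdf σ n * gaussPdf τ (u - n)) := by
    funext n
    rw [← integral_mul_const]
    congr 1
    funext u
    ring
  rw [step1]
  have swap : ∫ n, ∫ u, L u * (gaussPdf σ n * gaussPdf τ (u - n))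
      = ∫ u, ∫ n, L u * (gaussPdf σ n * gaussPdf τ (u - n)) := by
    apply integral_integral_swap
      (f := fun n u => L u * (gaussPdf σ n * gaussPdf τ (u - n)))
    exact hG.swap
  rw [swap]
  congr 1
  funext u
  rw [integral_const_mul, integral_gaussPdf_conv hσ hτ]

end KKTAux

open KKTAux

/-- Relative entropy identity for the KKT function:
`D(φ_{σ₁}(·−x) ‖ f_{Y₁}) − D(φ_{σ₂}(·−x) ‖ f_{Y₂}) = E[g(x+N₁)] + log(σ₂/σ₁)`. -/
theorem kkt_relative_entropy_identity
    (σ1 σ2 A : ℝ) (h1 : 0 < σ1) (h12 : σ1 < σ2) (hA : 0 < A)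
    (μ : Measure ℝ) [IsProbabilityMeasure μ] (hμ : ∀ᵐ x ∂μ, |x| ≤ A)
    (fY1 fY2 g : ℝ → ℝ)
    (hfY1 : ∀ y, fY1 y = ∫ x, gaussPdf σ1 (y - x) ∂μ)
    (hfY2 : ∀ y, fY2 y = ∫ x, gaussPdf σ2 (y - x) ∂μ)
    (hg : ∀ y, g y =
      (∫ n, Real.log (fY2 (y + n)) * gaussPdf (Real.sqrt (σ2 ^ 2 - σ1 ^ 2)) n)
        - Real.log (fY1 y)) :
    ∀ x : ℝ,
      klDivPdf (fun y => gaussPdf σ1 (y - x)) fY1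
          - klDivPdf (fun y => gaussPdf σ2 (y - x)) fY2
        = (∫ n, g (x + n) * gaussPdf σ1 n) + Real.log (σ2 / σ1) := by
  intro x
  have h2 : 0 < σ2 := h1.trans h12
  have hA' : (0:ℝ) ≤ A := hA.le
  have hττ : 0 < Real.sqrt (σ2^2 - σ1^2) :=
    Real.sqrt_pos.2 (by nlinarith)
  have hτ2 : (Real.sqrt (σ2^2 - σ1^2))^2 = σ2^2 - σ1^2 := Real.sq_sqrt (by nlinarith)
  have hc : Real.sqrt (σ1^2 + (Real.sqrt (σ2^2 - σ1^2))^2) = σ2 := by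
    rw [hτ2, show σ1^2 + (σ2^2 - σ1^2) = σ2^2 by ring, Real.sqrt_sq h2.le]
  -- continuity and positivity of the mixture densities
  have hF1c : Continuous fY1 := by
    have := continuous_fY (μ := μ) h1
    exact this.congr fun y => (hfY1 y).symm
  have hF2c : Continuous fY2 := by
    have := continuous_fY (μ := μ) h2
    exact this.congr fun y => (hfY2 y).symm
  have hF1pos : ∀ y, 0 < fY1 y := fun y => (hfY1 y) ▸ fY_pos h1 hA' hμ y
  have hF2pos : ∀ y, 0 < fY2 y := fun y => (hfY2 y) ▸ fY_pos h2 hA' hμ y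
  have hlog1 : ∀ y, |Real.log (fY1 y)|
      ≤ (|Real.log (Real.sqrt (2*π*σ1^2))| + A^2/σ1^2) + (1/σ1^2) * y^2 :=
    fun y => (hfY1 y) ▸ abs_log_fY_le h1 hA' hμ y
  have hlog2 : ∀ y, |Real.log (fY2 y)|
      ≤ (|Real.log (Real.sqrt (2*π*σ2^2))| + A^2/σ2^2) + (1/σ2^2) * y^2 :=
    fun y => (hfY2 y) ▸ abs_log_fY_le h2 hA' hμ y
  -- integrability of the log terms against Gaussians
  have hint1 : Integrable (fun n => Real.log (fY1 (x + n)) * gaussPdf σ1 n) :=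
    integrable_log_mul_gauss hF1c hF1pos (by positivity) hlog1 h1 x
  have hint2 : Integrable (fun n => Real.log (fY2 (x + n)) * gaussPdf σ2 n) :=
    integrable_log_mul_gauss hF2c hF2pos (by positivity) hlog2 h2 x
  have hintc : Integrable (fun u => Real.log (fY2 (x + u))
      * gaussPdf (Real.sqrt (σ1^2 + (Real.sqrt (σ2^2 - σ1^2))^2)) u) := by
    rw [hc]; exact hint2
  have hLcont : Continuous fun u => Real.log (fY2 (x + u)) :=
    (hF2c.comp (continuous_const.add continuous_id)).log fun u => (hF2pos _).ne'
  -- the two KL divergences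
  have KL1 := klDiv_gauss_eval (x := x) h1 hF1pos hint1
  have KL2 := klDiv_gauss_eval (x := x) h2 hF2pos hint2
  -- the right-hand side
  have hgsplit : (fun n => g (x + n) * gaussPdf σ1 n)
      = fun n => (∫ u, Real.log (fY2 (x + u))
            * gaussPdf (Real.sqrt (σ2^2 - σ1^2)) (u - n)) * gaussPdf σ1 n
          - Real.log (fY1 (x + n)) * gaussPdf σ1 n := by
    funext n
    rw [hg (x + n)]
    have ha : (∫ m, Real.log (fY2 (x + n + m)) * gaussPdf (Real.sqrt (σ2^2 - σ1^2)) m)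
        = ∫ u, Real.log (fY2 (x + u)) * gaussPdf (Real.sqrt (σ2^2 - σ1^2)) (u - n) := by
      rw [← integral_sub_right_eq_self
        (fun m => Real.log (fY2 (x + n + m)) * gaussPdf (Real.sqrt (σ2^2 - σ1^2)) m) n]
      congr 1
      funext u
      rw [show x + n + (u - n) = x + u by ring]
    rw [ha]
    ring
  have hG := gauss_prod_integrable h1 hττ hLcont hintc
  have hterm1int : Integrable (fun n => (∫ u, Real.log (fY2 (x + u))
      * gaussPdf (Real.sqrt (σ2^2 - σ1^2)) (u - n)) * gaussPdf σ1 n) := by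
    refine hG.integral_prod_right.congr (ae_of_all _ fun n => ?_)
    simp only
    rw [← integral_mul_const]
    congr 1
    funext u
    ring
  have hrhs : (∫ n, g (x + n) * gaussPdf σ1 n)
      = (∫ n, Real.log (fY2 (x + n)) * gaussPdf σ2 n)
        - ∫ n, Real.log (fY1 (x + n)) * gaussPdf σ1 n := by
    rw [hgsplit, integral_sub hterm1int hint1, fubini_conv h1 hττ hLcont hintc, hc]
  -- log ratio of normalizing constants
  have hlogratio : Real.log (Real.sqrt (2*π*σ2^2)) - Real.log (Real.sqrt (2*π*σ1^2))
      = Real.log (σ2/σ1) := by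
    have e1 : Real.sqrt (2*π*σ1^2) = Real.sqrt (2*π) * σ1 := by
      rw [show 2*π*σ1^2 = (2*π)*σ1^2 by ring, Real.sqrt_mul (by positivity), Real.sqrt_sq h1.le]
    have e2 : Real.sqrt (2*π*σ2^2) = Real.sqrt (2*π) * σ2 := by
      rw [show 2*π*σ2^2 = (2*π)*σ2^2 by ring, Real.sqrt_mul (by positivity), Real.sqrt_sq h2.le]
    have h2π : (0:ℝ) < Real.sqrt (2*π) := Real.sqrt_pos.2 (by positivity)
    rw [e1, e2, Real.log_mul h2π.ne' h1.ne', Real.log_mul h2π.ne' h2.ne',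
      Real.log_div h2.ne' h1.ne']
    ring
  rw [KL1, KL2, hrhs]
  linarith
end
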